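/- Let R be a norm on ℝ^p with dual norm R*(z) = sup{zᵀw : R(w) ≤ 1}, let L : ℝ^p → ℝ be convex and differentiable, let λ > 0, β* ∈ ℝ^p, r > 0, and let β̃ be a minimizer of β ↦ L(β) + λ·R(β) over the closed Euclidean ball {β : ‖β − β*‖₂ ≤ r}. If R*(∇L(β*)) ≤ λ/2, then the error vector v := β̃ − β* satisfies 0 ≤ L(β̃) − L(β*) − ∇L(β*)ᵀv ≤ λ(R(β*) − R(β̃)) + (λ/2)·R(v), and consequently R(v)/2 + R(β*) − R(β* + v) ≥ 0. -/

import Mathlib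

open scoped RealInnerProductSpace

/-- First-order condition for convex differentiable functions. -/
lemma grad_ineq {p : ℕ} (L : EuclideanSpace ℝ (Fin p) → ℝ)
    (hL_conv : ConvexOn ℝ Set.univ L)
    (hL_diff : ∀ x, DifferentiableAt ℝ L x)
    (x y : EuclideanSpace ℝ (Fin p)) :
    ⟪gradient L x, y - x⟫ ≤ L y - L x := by
  set v := y - x with hv
  have hinner : ⟪gradient L x, v⟫ = fderiv ℝ L x v := by
    have : gradient L x = (InnerProductSpace.toDual ℝ _).symm (fderiv ℝ L x) := rfl
    rw [this]
    simpa using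
      congrFun (congrArg _ ((InnerProductSpace.toDual ℝ _).apply_symm_apply (fderiv ℝ L x))) v
  have hc : ∀ t : ℝ, HasDerivAt (fun t : ℝ => x + t • v) v t := fun t => by
    simpa using ((hasDerivAt_id t).smul_const v).const_add x
  have hg : HasDerivAt (fun t : ℝ => L (x + t • v)) (fderiv ℝ L x v) 0 := by
    have := (hL_diff (x + (0:ℝ) • v)).hasFDerivAt.comp_hasDerivAt 0 (hc 0)
    simp only [zero_smul, add_zero] at this
    exact this
  have hgc : ConvexOn ℝ Set.univ (fun t : ℝ => L (x + t • v)) := by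
    have haff : ConvexOn ℝ Set.univ (L ∘ AffineMap.lineMap x (x + v)) :=
      (((hL_conv.subset (Set.subset_univ _)
        ((convex_univ).affine_image _)).comp_affineMap
          (AffineMap.lineMap x (x + v))).subset
        (Set.subset_preimage_image _ _) convex_univ)
    convert haff using 2 with t
    · rfl
    · rfl
    simp [AffineMap.lineMap_apply]
    abel
  have := hgc.le_slope_of_hasDerivAt (Set.mem_univ (0:ℝ)) (Set.mem_univ (1:ℝ))
    one_pos hg
  rw [slope_def_field] at this
  simp only [one_smul, zero_smul, add_zero, sub_zero, div_one] at this
  rw [hinner]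
  have hxy : x + v = y := by rw [hv]; abel
  rw [hxy] at this
  linarith

/-- **The error vector of the penalized robust estimator lies in the anti-concentration cone.**
Under the deviation condition `R*(∇L(β*)) ≤ λ/2`, the error `v = β̃ - β*` satisfies the basic
inequality `0 ≤ L(β̃) - L(β*) - ∇L(β*)ᵀv ≤ λ(R(β*) - R(β̃)) + (λ/2)R(v)` and hence
`R(v)/2 + R(β*) - R(β* + v) ≥ 0`. -/
theorem error_vector_in_cone {p : ℕ}
    (R : EuclideanSpace ℝ (Fin p) → ℝ)
    (hR_add : ∀ x y, R (x + y) ≤ R x + R y)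
    (hR_smul : ∀ (c : ℝ) (x), R (c • x) = |c| * R x)
    (hR_pos : ∀ x, x ≠ 0 → 0 < R x)
    (L : EuclideanSpace ℝ (Fin p) → ℝ)
    (hL_conv : ConvexOn ℝ Set.univ L)
    (hL_diff : ∀ x, DifferentiableAt ℝ L x)
    (lam : ℝ) (hlam : 0 < lam)
    (βs βt : EuclideanSpace ℝ (Fin p)) (r : ℝ) (hr : 0 < r)
    -- `βt` is a minimizer of `L + lam • R` over the closed ball of radius `r` around `βs`
    (hfeas : ‖βt - βs‖ ≤ r)
    (hmin : ∀ β, ‖β - βs‖ ≤ r → L βt + lam * R βt ≤ L β + lam * R β)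
    -- deviation condition: the dual norm of the gradient at `βs` is at most `lam/2`
    (hdev : ∀ w, R w ≤ 1 → ⟪gradient L βs, w⟫ ≤ lam / 2) :
    (0 ≤ L βt - L βs - ⟪gradient L βs, βt - βs⟫ ∧
      L βt - L βs - ⟪gradient L βs, βt - βs⟫ ≤
        lam * (R βs - R βt) + (lam / 2) * R (βt - βs)) ∧
    R (βt - βs) / 2 + R βs - R (βs + (βt - βs)) ≥ 0 := by
  have hlow : 0 ≤ L βt - L βs - ⟪gradient L βs, βt - βs⟫ := by
    have := grad_ineq L hL_conv hL_diff βs βt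
    linarith
  -- dual norm bound
  have hdual : ∀ w, ⟪gradient L βs, w⟫ ≤ lam / 2 * R w := by
    intro w
    by_cases hw : w = 0
    · have : R (0 : EuclideanSpace ℝ (Fin p)) = 0 := by
        have := hR_smul 0 0; simpa using this
      simp [hw, this]
    · have hRw : 0 < R w := hR_pos w hw
      have h1 : R ((R w)⁻¹ • w) ≤ 1 := by
        rw [hR_smul, abs_of_pos (by positivity)]
        rw [inv_mul_cancel₀ hRw.ne']
      have := hdev _ h1
      rw [real_inner_smul_right] at this
      have h2 : ⟪gradient L βs, w⟫ ≤ lam / 2 * R w := by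
        have := mul_le_mul_of_nonneg_left this hRw.le
        rw [← mul_assoc, mul_inv_cancel₀ hRw.ne', one_mul] at this
        linarith [this]
      exact h2
  have hmin' := hmin βs (by simp [hr.le])
  have hneg : -⟪gradient L βs, βt - βs⟫ ≤ lam / 2 * R (βt - βs) := by
    have := hdual (-(βt - βs))
    rw [inner_neg_right] at this
    have hRneg : R (-(βt - βs)) = R (βt - βs) := by
      have := hR_smul (-1) (βt - βs); simpa using this
    rw [hRneg] at this
    linarith
  have hup : L βt - L βs - ⟪gradient L βs, βt - βs⟫ ≤
      lam * (R βs - R βt) + (lam / 2) * R (βt - βs) := by linarith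
  refine ⟨⟨hlow, hup⟩, ?_⟩
  have hβ : βs + (βt - βs) = βt := by abel
  rw [hβ]
  nlinarith [hlow, hup]
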